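/- In the logistic model with y | X ~ Bernoulli(f(X^⊤β)) and X ~ N(0, I_p), where f(u) = e^u/(1+e^u), the chi-square affinity between two parameter values β and β' at the null β₀ = 0 satisfies ∫ p(X,y;β) p(X,y;β') / p(X,y;0) dX dy = E_{X~N(0,I_p)}[1 + tanh(X^⊤β/2)·tanh(X^⊤β'/2)], where p(X,y;β) denotes the joint density of (X,y) and p(X,y;0) = 2^{-1}(2π)^{-p/2}e^{-‖X‖²/2}. -/

import Mathlib

open MeasureTheory ProbabilityTheory Real
open scoped NNReal ENNReal

lemma tanh_half (u : ℝ) : Real.tanh (u/2) = (rexp u - 1)/(rexp u + 1) := by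
  have ht : 0 < rexp (u/2) := Real.exp_pos _
  have htt : rexp (u/2) * rexp (u/2) = rexp u := by
    rw [← Real.exp_add]; ring_nf
  rw [Real.tanh_eq_sinh_div_cosh, Real.sinh_eq, Real.cosh_eq, Real.exp_neg]
  rw [div_eq_div_iff (by positivity) (by positivity)]
  field_simp
  nlinarith [htt]

lemma gauss_prod (p : ℕ) (x : Fin p → ℝ) :
    ∏ i, gaussianPDFReal 0 1 (x i)
      = (2 * Real.pi) ^ (-(p : ℝ) / 2) * Real.exp (-(∑ i, (x i) ^ 2) / 2) := by
  have h2p : (0:ℝ) ≤ 2 * Real.pi := by positivity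
  simp only [gaussianPDFReal, NNReal.coe_one, mul_one, sub_zero]
  rw [Finset.prod_mul_distrib, Finset.prod_const, ← Real.exp_sum]
  congr 1
  · rw [Real.sqrt_eq_rpow, ← Real.rpow_neg_one, ← Real.rpow_natCast (_ ^ _),
      ← Real.rpow_mul h2p, ← Real.rpow_mul h2p]
    congr 1
    simp [Finset.card_univ]
    ring
  · congr 1
    rw [← Finset.sum_div, Finset.sum_neg_distrib, neg_div]

lemma pi_gauss_eq (p : ℕ) :
    (Measure.pi fun _ : Fin p => gaussianReal 0 1) =
      (volume : Measure (Fin p → ℝ)).withDensity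
        (fun x => ENNReal.ofReal (∏ i, gaussianPDFReal 0 1 (x i))) := by
  apply Measure.pi_eq
  intro s hs
  rw [withDensity_apply _ (MeasurableSet.univ_pi hs)]
  have hint : Integrable (fun x : Fin p → ℝ => ∏ i, gaussianPDFReal 0 1 (x i)) :=
    Integrable.fintype_prod fun _ => integrable_gaussianPDFReal 0 1
  rw [← ofReal_integral_eq_lintegral_ofReal (hint.integrableOn)
    (ae_of_all _ fun x => Finset.prod_nonneg fun i _ => gaussianPDFReal_nonneg 0 1 (x i))]
  have hind : ∀ x : Fin p → ℝ,
      (Set.pi Set.univ s).indicator (fun x => ∏ i, gaussianPDFReal 0 1 (x i)) x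
        = ∏ i, (s i).indicator (gaussianPDFReal 0 1) (x i) := by
    intro x
    by_cases hx : x ∈ Set.pi Set.univ s
    · rw [Set.indicator_of_mem hx]
      exact Finset.prod_congr rfl fun i _ =>
        (Set.indicator_of_mem (hx i (Set.mem_univ i)) _).symm
    · rw [Set.indicator_of_notMem hx]
      simp only [Set.mem_pi, Set.mem_univ, forall_true_left, not_forall] at hx
      obtain ⟨i, hi⟩ := hx
      exact (Finset.prod_eq_zero (Finset.mem_univ i) (Set.indicator_of_notMem hi _)).symm
  rw [← integral_indicator (MeasurableSet.univ_pi hs)]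
  simp_rw [hind]
  rw [volume_pi]
  rw [MeasureTheory.integral_fintype_prod_eq_prod (ι := Fin p)
    (f := fun i => (fun t => (s i).indicator (gaussianPDFReal 0 1) t))]
  rw [ENNReal.ofReal_prod_of_nonneg
    (fun i _ => integral_nonneg (Set.indicator_nonneg (fun t _ => gaussianPDFReal_nonneg 0 1 t)))]
  refine Finset.prod_congr rfl fun i _ => ?_
  rw [integral_indicator (hs i), gaussianReal_apply_eq_integral 0 one_ne_zero]

lemma integral_pi_gauss (p : ℕ) (g : (Fin p → ℝ) → ℝ) :
    ∫ x, g x ∂(Measure.pi fun _ : Fin p => gaussianReal 0 1)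
      = ∫ x : Fin p → ℝ, (∏ i, gaussianPDFReal 0 1 (x i)) * g x := by
  rw [pi_gauss_eq]
  have hF : Measurable fun x : Fin p → ℝ => Real.toNNReal (∏ i, gaussianPDFReal 0 1 (x i)) :=
    (Finset.measurable_prod _ fun i _ =>
      (measurable_gaussianPDFReal 0 1).comp (measurable_pi_apply i)).real_toNNReal
  have heq : (fun x : Fin p → ℝ => ENNReal.ofReal (∏ i, gaussianPDFReal 0 1 (x i)))
      = fun x => ((Real.toNNReal (∏ i, gaussianPDFReal 0 1 (x i)) : ℝ≥0) : ℝ≥0∞) := rfl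
  rw [heq, integral_withDensity_eq_integral_smul hF]
  refine integral_congr_ae (ae_of_all _ fun x => ?_)
  simp [NNReal.smul_def,
    Real.coe_toNNReal _ (Finset.prod_nonneg fun i _ => gaussianPDFReal_nonneg 0 1 (x i))]

lemma exp_div_bounds (u : ℝ) : 0 ≤ rexp u / (1 + rexp u) ∧ rexp u / (1 + rexp u) ≤ 1 :=
  ⟨by positivity, by rw [div_le_one (by positivity)]; linarith [Real.exp_pos u]⟩

/-- Joint density of `(X, y)` in the logistic model with `X ~ N(0, I_p)`,
`y | X ~ Bernoulli(f(Xᵀβ))`, `f(u) = eᵘ/(1+eᵘ)`, where `y ∈ {0,1}`. -/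
noncomputable def logisticPdf (p : ℕ) (β : Fin p → ℝ) (x : Fin p → ℝ) (y : ℕ) : ℝ :=
  (2 * Real.pi) ^ (-(p : ℝ) / 2) * Real.exp (-(∑ i, (x i) ^ 2) / 2) *
    (Real.exp (∑ i, x i * β i) / (1 + Real.exp (∑ i, x i * β i))) ^ y *
    (1 - Real.exp (∑ i, x i * β i) / (1 + Real.exp (∑ i, x i * β i))) ^ (1 - y)

theorem stmt17 (p : ℕ) (β β' : Fin p → ℝ) :
    ∑ y ∈ Finset.range 2,
        ∫ x : Fin p → ℝ,
          logisticPdf p β x y * logisticPdf p β' x y / logisticPdf p 0 x y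
      = ∫ x : Fin p → ℝ,
          (1 + Real.tanh ((∑ i, x i * β i) / 2) * Real.tanh ((∑ i, x i * β' i) / 2))
          ∂(Measure.pi fun _ => gaussianReal 0 1) := by
  set fa : (Fin p → ℝ) → ℝ :=
    fun x => rexp (∑ i, x i * β i) / (1 + rexp (∑ i, x i * β i)) with hfa
  set fb : (Fin p → ℝ) → ℝ :=
    fun x => rexp (∑ i, x i * β' i) / (1 + rexp (∑ i, x i * β' i)) with hfb
  have key0 : ∀ x : Fin p → ℝ,
      logisticPdf p β x 0 * logisticPdf p β' x 0 / logisticPdf p 0 x 0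
        = (2 * ((1 - fa x) * (1 - fb x))) * ∏ i, gaussianPDFReal 0 1 (x i) := by
    intro x
    rw [gauss_prod]
    simp only [logisticPdf, Pi.zero_apply, mul_zero, Finset.sum_const_zero, Real.exp_zero,
      pow_zero, pow_one, mul_one, Nat.sub_zero, hfa, hfb]
    norm_num
    rw [div_eq_iff (by positivity)]
    ring
  have key1 : ∀ x : Fin p → ℝ,
      logisticPdf p β x 1 * logisticPdf p β' x 1 / logisticPdf p 0 x 1
        = (2 * (fa x * fb x)) * ∏ i, gaussianPDFReal 0 1 (x i) := by
    intro x
    rw [gauss_prod]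
    simp only [logisticPdf, Pi.zero_apply, mul_zero, Finset.sum_const_zero, Real.exp_zero,
      pow_zero, pow_one, mul_one, Nat.sub_self, hfa, hfb]
    norm_num
    rw [div_eq_iff (by positivity)]
    ring
  have hFint : Integrable (fun x : Fin p → ℝ => ∏ i, gaussianPDFReal 0 1 (x i)) :=
    Integrable.fintype_prod fun _ => integrable_gaussianPDFReal 0 1
  have hca : Continuous fa := by
    have h : Continuous fun x : Fin p → ℝ => ∑ i, x i * β i := by fun_prop
    exact (Real.continuous_exp.comp h).div
      (continuous_const.add (Real.continuous_exp.comp h)) (fun x => by positivity)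
  have hcb : Continuous fb := by
    have h : Continuous fun x : Fin p → ℝ => ∑ i, x i * β' i := by fun_prop
    exact (Real.continuous_exp.comp h).div
      (continuous_const.add (Real.continuous_exp.comp h)) (fun x => by positivity)
  have hbnd : ∀ x : Fin p → ℝ, (0 ≤ fa x ∧ fa x ≤ 1) ∧ (0 ≤ fb x ∧ fb x ≤ 1) :=
    fun x => ⟨exp_div_bounds _, exp_div_bounds _⟩
  have hint0 : Integrable (fun x : Fin p → ℝ =>
      (2 * ((1 - fa x) * (1 - fb x))) * ∏ i, gaussianPDFReal 0 1 (x i)) := by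
    refine hFint.bdd_mul (c := 2) ?_ (ae_of_all _ fun x => ?_)
    · exact (continuous_const.mul
        ((continuous_const.sub hca).mul (continuous_const.sub hcb))).aestronglyMeasurable
    · obtain ⟨⟨h1, h2⟩, ⟨h3, h4⟩⟩ := hbnd x
      rw [Real.norm_eq_abs, abs_le]
      constructor <;> nlinarith
  have hint1 : Integrable (fun x : Fin p → ℝ =>
      (2 * (fa x * fb x)) * ∏ i, gaussianPDFReal 0 1 (x i)) := by
    refine hFint.bdd_mul (c := 2) ?_ (ae_of_all _ fun x => ?_)
    · exact (continuous_const.mul (hca.mul hcb)).aestronglyMeasurable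
    · obtain ⟨⟨h1, h2⟩, ⟨h3, h4⟩⟩ := hbnd x
      rw [Real.norm_eq_abs, abs_le]
      constructor <;> nlinarith
  rw [Finset.sum_range_succ, Finset.sum_range_succ, Finset.sum_range_zero, zero_add]
  rw [integral_congr_ae (ae_of_all _ key0), integral_congr_ae (ae_of_all _ key1)]
  rw [← integral_add hint0 hint1, integral_pi_gauss]
  refine integral_congr_ae (ae_of_all _ fun x => ?_)
  dsimp only
  rw [← add_mul, mul_comm]
  congr 1
  rw [tanh_half, tanh_half, hfa, hfb]
  have h1 : (0:ℝ) < 1 + rexp (∑ i, x i * β i) := by positivity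
  have h2 : (0:ℝ) < 1 + rexp (∑ i, x i * β' i) := by positivity
  have h3 : (0:ℝ) < rexp (∑ i, x i * β i) + 1 := by positivity
  have h4 : (0:ℝ) < rexp (∑ i, x i * β' i) + 1 := by positivity
  field_simp
  ring
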